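/- arXiv:2311.11063 — 6 statements merged into one kernel-verified Lean document; each statement's English description precedes it below -/
import Mathlib

section
/- With the setup of a balanced cut (P_A, V_cut, P_B) of G and P ∈ {P_A, P_B}, the shortcut-enhanced subgraph G⟨P⟩ — obtained from G[P] by adding, for every pair of border vertices b_i, b_j of P, an edge of weight d_G(b_i, b_j) — is distance-preserving: for all x, y ∈ P, the distance between x and y in G⟨P⟩ equals d_G(x, y). -/
/-- The weight of a walk in a weighted graph: the sum of the weights of its edges. -/
def walkWeight {V : Type*} {G : SimpleGraph V} (wt : V → V → ℝ) {u v : V}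
    (p : G.Walk u v) : ℝ :=
  (p.darts.map (fun d => wt d.toProd.1 d.toProd.2)).sum

/-- The shortcut-enhanced subgraph `G⟨P⟩`, obtained from `G[P]` by adding, for every pair
of border vertices of `P`, an edge weighted by their `G`-distance, is distance-preserving:
distances in `G⟨P⟩` equal distances in `G` for all pairs of vertices of `P`. -/
theorem shortcut_enhanced_distance_preserving {V : Type*} [Fintype V]
    (G G' : SimpleGraph V) (wt wt' : V → V → ℝ)
    (hwpos : ∀ u v, G.Adj u v → 0 < wt u v)
    (hwsymm : ∀ u v, wt u v = wt v u)
    (d dP' : V → V → ℝ)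
    (PA PB Vcut : Set V)
    (hpart : ∀ v : V, (v ∈ PA ∧ v ∉ PB ∧ v ∉ Vcut) ∨ (v ∈ PB ∧ v ∉ PA ∧ v ∉ Vcut) ∨
      (v ∈ Vcut ∧ v ∉ PA ∧ v ∉ PB))
    (hsep : ∀ a ∈ PA, ∀ b ∈ PB, ¬ G.Adj a b)
    (P : Set V) (hP : P = PA ∨ P = PB)
    (B : Set V) (hB : B = {v : V | v ∈ P ∧ ∃ c ∈ Vcut, G.Adj v c})
    (hd : ∀ x y : V, IsLeast {r : ℝ | ∃ p : G.Walk x y, walkWeight wt p = r} (d x y))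
    -- the enhanced graph: original edges within `P` plus shortcuts between border vertices
    (hG' : ∀ u v : V, G'.Adj u v ↔ u ≠ v ∧
      ((G.Adj u v ∧ u ∈ P ∧ v ∈ P) ∨ (u ∈ B ∧ v ∈ B)))
    -- shortcut edges carry the `G`-distance as weight; other edges keep their weight
    (hwt'B : ∀ u v : V, u ∈ B → v ∈ B → wt' u v = d u v)
    (hwt'E : ∀ u v : V, ¬ (u ∈ B ∧ v ∈ B) → wt' u v = wt u v)
    (hdP' : ∀ x ∈ P, ∀ y ∈ P, IsLeast
      {r : ℝ | ∃ p : G'.Walk x y, walkWeight wt' p = r} (dP' x y)) :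
    ∀ x ∈ P, ∀ y ∈ P, dP' x y = d x y := by
  -- basic walk-weight computation lemmas
  have wnil : ∀ (w'' : V → V → ℝ) {H : SimpleGraph V} {u : V},
      walkWeight w'' (SimpleGraph.Walk.nil : H.Walk u u) = 0 := by
    intros; simp [walkWeight]
  have wcons : ∀ (w'' : V → V → ℝ) {H : SimpleGraph V} {u v w : V} (h : H.Adj u v)
      (p : H.Walk v w),
      walkWeight w'' (SimpleGraph.Walk.cons h p) = w'' u v + walkWeight w'' p := by
    intros; simp [walkWeight]
  have wapp : ∀ (w'' : V → V → ℝ) {H : SimpleGraph V} {u v w : V} (p : H.Walk u v)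
      (q : H.Walk v w),
      walkWeight w'' (p.append q) = walkWeight w'' p + walkWeight w'' q := by
    intros; simp [walkWeight, SimpleGraph.Walk.darts_append]
  -- nonnegativity of G-walk weights
  have hw0 : ∀ {u v : V} (p : G.Walk u v), 0 ≤ walkWeight wt p := by
    intro u v p
    induction p with
    | nil => rw [wnil]
    | cons h p ih =>
      rw [wcons]
      have := hwpos _ _ h
      linarith
  have hdle : ∀ (u v : V) (p : G.Walk u v), d u v ≤ walkWeight wt p :=
    fun u v p => (hd u v).2 ⟨p, rfl⟩
  have hd0 : ∀ u v : V, 0 ≤ d u v := by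
    intro u v
    obtain ⟨p, hp⟩ := (hd u v).1
    rw [← hp]; exact hw0 p
  -- d ≤ single edge weight
  have hdedge : ∀ {u w : V}, G.Adj u w → d u w ≤ wt u w := by
    intro u w h
    have := hdle u w (SimpleGraph.Walk.cons h SimpleGraph.Walk.nil)
    rw [wcons, wnil] at this
    linarith
  -- triangle inequality d u b ≤ wt u w + d w b for G.Adj u w
  have htri : ∀ {u w b : V}, G.Adj u w → d u b ≤ wt u w + d w b := by
    intro u w b h
    obtain ⟨r, hr⟩ := (hd w b).1
    have := hdle u b (SimpleGraph.Walk.cons h r)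
    rw [wcons] at this
    linarith
  have hBmem : ∀ z : V, z ∈ B ↔ z ∈ P ∧ ∃ c ∈ Vcut, G.Adj z c := by
    intro z; rw [hB]; exact Iff.rfl
  -- a neighbor of P outside P is in the cut
  have hcut : ∀ u w : V, u ∈ P → G.Adj u w → w ∉ P → w ∈ Vcut := by
    intro u w huP hadj hwP
    rcases hpart w with ⟨hA, _, _⟩ | ⟨hBB, _, _⟩ | ⟨hc, _, _⟩
    · rcases hP with rfl | rfl
      · exact absurd hA hwP
      · exact absurd hadj.symm (hsep w hA u huP)
    · rcases hP with rfl | rfl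
      · exact absurd hadj (hsep u huP w hBB)
      · exact absurd hBB hwP
    · exact hc
  -- every G'-walk dominates some G-walk
  have conv1 : ∀ {u v : V} (q : G'.Walk u v),
      ∃ r : G.Walk u v, walkWeight wt r ≤ walkWeight wt' q := by
    intro u v q
    induction q with
    | nil => exact ⟨SimpleGraph.Walk.nil, by rw [wnil, wnil]⟩
    | @cons a b c h q ih =>
      obtain ⟨r, hr⟩ := ih
      by_cases hb : a ∈ B ∧ b ∈ B
      · obtain ⟨r0, hr0⟩ := (hd a b).1
        refine ⟨r0.append r, ?_⟩
        have hw : wt' a b = d a b := hwt'B a b hb.1 hb.2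
        rw [wapp, wcons]
        linarith
      · obtain ⟨hne, hor⟩ := (hG' a b).mp h
        rcases hor with ⟨hadj, _, _⟩ | hbb
        · refine ⟨SimpleGraph.Walk.cons hadj r, ?_⟩
          rw [wcons, wcons, hwt'E a b hb]
          linarith
        · exact absurd hbb hb
  -- every G-walk between vertices of P dominates some G'-walk
  have key : ∀ {u v : V} (p : G.Walk u v), v ∈ P →
      (u ∈ P → ∃ q : G'.Walk u v, walkWeight wt' q ≤ walkWeight wt p) ∧
      (u ∉ P → ∃ b' ∈ B, ∃ q : G'.Walk b' v,
        d u b' + walkWeight wt' q ≤ walkWeight wt p) := by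
    intro u v p
    induction p with
    | nil =>
      intro hv
      refine ⟨fun _ => ⟨SimpleGraph.Walk.nil, by rw [wnil, wnil]⟩, fun hu => absurd hv hu⟩
    | @cons a b c h p ih =>
      intro hv
      obtain ⟨ih1, ih2⟩ := ih hv
      by_cases hwP : b ∈ P
      · obtain ⟨q, hq⟩ := ih1 hwP
        constructor
        · intro haP
          have hadj' : G'.Adj a b := (hG' a b).mpr ⟨h.ne, Or.inl ⟨h, haP, hwP⟩⟩
          have hle : wt' a b ≤ wt a b := by
            by_cases hbb : a ∈ B ∧ b ∈ B
            · rw [hwt'B a b hbb.1 hbb.2]; exact hdedge h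
            · rw [hwt'E a b hbb]
          refine ⟨SimpleGraph.Walk.cons hadj' q, ?_⟩
          rw [wcons, wcons]
          linarith
        · intro haP
          have hacut : a ∈ Vcut := hcut b a hwP h.symm haP
          have hbB : b ∈ B := (hBmem b).mpr ⟨hwP, a, hacut, h.symm⟩
          refine ⟨b, hbB, q, ?_⟩
          rw [wcons]
          have := hdedge h
          linarith
      · obtain ⟨b', hb', q, hq⟩ := ih2 hwP
        constructor
        · intro haP
          have hbcut : b ∈ Vcut := hcut a b haP h hwP
          have haB : a ∈ B := (hBmem a).mpr ⟨haP, b, hbcut, h⟩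
          by_cases hab : a = b'
          · subst hab
            refine ⟨q, ?_⟩
            rw [wcons]
            have h1 := hd0 b a
            have h2 := hwpos a b h
            linarith
          · have hadj' : G'.Adj a b' := (hG' a b').mpr ⟨hab, Or.inr ⟨haB, hb'⟩⟩
            refine ⟨SimpleGraph.Walk.cons hadj' q, ?_⟩
            rw [wcons, wcons, hwt'B a b' haB hb']
            have := htri h (b := b')
            linarith
        · intro _
          refine ⟨b', hb', q, ?_⟩
          rw [wcons]
          have := htri h (b := b')
          linarith
  intro x hx y hy
  obtain ⟨hmem', hlb'⟩ := hdP' x hx y hy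
  obtain ⟨hmem, _⟩ := hd x y
  obtain ⟨q, hq⟩ := hmem'
  obtain ⟨p, hp⟩ := hmem
  obtain ⟨r, hr⟩ := conv1 q
  have h1 : d x y ≤ dP' x y := by
    have := hdle x y r
    linarith [hq ▸ hr]
  have h2 : dP' x y ≤ d x y := by
    obtain ⟨q', hq'⟩ := (key p hy).1 hx
    have := hlb' ⟨q', rfl⟩
    rw [hp] at hq'
    linarith
  linarith
end

section
/- Let P be one side of a balanced cut (P_A, V_cut, P_B) of G and let b_1, b_2 be border vertices of P. If either (i) d_{G[P]}(b_1, b_2) = d_G(b_1, b_2), or (ii) there exists a third border vertex b_3 of P with d_G(b_1, b_2) = d_G(b_1, b_3) + d_G(b_3, b_2), then the shortcut-enhanced subgraph obtained by omitting the shortcut (b_1, b_2) is still distance-preserving for all pairs of vertices in P. -/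
namespace RedAux

open SimpleGraph

variable {V : Type*} {G : SimpleGraph V} (wt : V → V → ℝ)

lemma walkWeight_nil {u : V} : walkWeight wt (Walk.nil : G.Walk u u) = 0 := rfl

lemma walkWeight_cons {u v w : V} (h : G.Adj u v) (p : G.Walk v w) :
    walkWeight wt (Walk.cons h p) = wt u v + walkWeight wt p := by
  simp [walkWeight]

lemma walkWeight_append {u v w : V} (p : G.Walk u v) (q : G.Walk v w) :
    walkWeight wt (p.append q) = walkWeight wt p + walkWeight wt q := by
  simp [walkWeight, Walk.darts_append]

lemma walkWeight_reverse (hwsymm : ∀ u v, wt u v = wt v u) {u v : V} (p : G.Walk u v) :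
    walkWeight wt p.reverse = walkWeight wt p := by
  simp only [walkWeight, Walk.darts_reverse, List.map_reverse, List.sum_reverse,
    List.map_map]
  have : ((fun d => wt d.toProd.1 d.toProd.2) ∘ Dart.symm) =
      (fun d : G.Dart => wt d.toProd.1 d.toProd.2) := by
    funext dd
    simp [Dart.symm, hwsymm dd.toProd.2 dd.toProd.1]
  rw [this]

lemma walkWeight_nonneg (hpos : ∀ u v, G.Adj u v → 0 < wt u v) {u v : V} (p : G.Walk u v) :
    0 ≤ walkWeight wt p := by
  apply List.sum_nonneg
  intro x hx
  simp only [List.mem_map] at hx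
  obtain ⟨dd, _, rfl⟩ := hx
  exact (hpos _ _ dd.adj).le

end RedAux

/-- Redundant shortcuts may be omitted: if the shortcut between border vertices `b₁, b₂`
satisfies either (i) `d_{G[P]}(b₁,b₂) = d_G(b₁,b₂)`, or (ii) some third border vertex `b₃`
lies on a shortest path between `b₁` and `b₂`, then the shortcut-enhanced subgraph with
the shortcut `(b₁,b₂)` omitted is still distance-preserving on `P`. -/
theorem redundant_shortcut_omission {V : Type*} [Fintype V]
    (G G' : SimpleGraph V) (wt wt' : V → V → ℝ)
    (hwpos : ∀ u v, G.Adj u v → 0 < wt u v)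
    (hwsymm : ∀ u v, wt u v = wt v u)
    (d dP dP' : V → V → ℝ)
    (PA PB Vcut : Set V)
    (hpart : ∀ v : V, (v ∈ PA ∧ v ∉ PB ∧ v ∉ Vcut) ∨ (v ∈ PB ∧ v ∉ PA ∧ v ∉ Vcut) ∨
      (v ∈ Vcut ∧ v ∉ PA ∧ v ∉ PB))
    (hsep : ∀ a ∈ PA, ∀ b ∈ PB, ¬ G.Adj a b)
    (P : Set V) (hP : P = PA ∨ P = PB)
    (B : Set V) (hB : B = {v : V | v ∈ P ∧ ∃ c ∈ Vcut, G.Adj v c})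
    (hd : ∀ x y : V, IsLeast {r : ℝ | ∃ p : G.Walk x y, walkWeight wt p = r} (d x y))
    (hdP : ∀ x ∈ P, ∀ y ∈ P, IsLeast
      {r : ℝ | ∃ p : G.Walk x y, (∀ v ∈ p.support, v ∈ P) ∧ walkWeight wt p = r} (dP x y))
    (b₁ b₂ : V) (hb₁ : b₁ ∈ B) (hb₂ : b₂ ∈ B) (hb12 : b₁ ≠ b₂)
    -- the shortcut `(b₁, b₂)` is redundant
    (hredundant : dP b₁ b₂ = d b₁ b₂ ∨
      ∃ b₃ ∈ B, b₃ ≠ b₁ ∧ b₃ ≠ b₂ ∧ d b₁ b₂ = d b₁ b₃ + d b₃ b₂)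
    -- the enhanced graph with the shortcut `(b₁, b₂)` omitted
    (hG' : ∀ u v : V, G'.Adj u v ↔ u ≠ v ∧
      ((G.Adj u v ∧ u ∈ P ∧ v ∈ P) ∨
        (u ∈ B ∧ v ∈ B ∧ ¬ ((u = b₁ ∧ v = b₂) ∨ (u = b₂ ∧ v = b₁)))))
    (hwt'B : ∀ u v : V, u ∈ B → v ∈ B → wt' u v = d u v)
    (hwt'E : ∀ u v : V, ¬ (u ∈ B ∧ v ∈ B) → wt' u v = wt u v)
    (hdP' : ∀ x ∈ P, ∀ y ∈ P, IsLeast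
      {r : ℝ | ∃ p : G'.Walk x y, walkWeight wt' p = r} (dP' x y)) :
    ∀ x ∈ P, ∀ y ∈ P, dP' x y = d x y := by
  classical
  have dmem : ∀ x y : V, ∃ p : G.Walk x y, walkWeight wt p = d x y := fun x y => (hd x y).1
  have dle : ∀ {x y : V} (p : G.Walk x y), d x y ≤ walkWeight wt p :=
    fun {x y} p => (hd x y).2 ⟨p, rfl⟩
  have dnonneg : ∀ x y : V, 0 ≤ d x y := by
    intro x y
    obtain ⟨p, hp⟩ := dmem x y
    exact hp ▸ RedAux.walkWeight_nonneg wt hwpos p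
  have dsymm : ∀ x y : V, d x y = d y x := by
    intro x y
    have h1 : ∀ a b : V, d a b ≤ d b a := by
      intro a b
      obtain ⟨p, hp⟩ := dmem b a
      calc d a b ≤ walkWeight wt p.reverse := dle _
        _ = walkWeight wt p := RedAux.walkWeight_reverse wt hwsymm p
        _ = d b a := hp
    exact le_antisymm (h1 x y) (h1 y x)
  have dtri : ∀ x y z : V, d x z ≤ d x y + d y z := by
    intro x y z
    obtain ⟨p, hp⟩ := dmem x y
    obtain ⟨q, hq⟩ := dmem y z
    calc d x z ≤ walkWeight wt (p.append q) := dle _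
      _ = d x y + d y z := by rw [RedAux.walkWeight_append, hp, hq]
  have dadj : ∀ x y : V, G.Adj x y → d x y ≤ wt x y := by
    intro x y h
    have := dle (SimpleGraph.Walk.cons h SimpleGraph.Walk.nil)
    rwa [RedAux.walkWeight_cons, RedAux.walkWeight_nil, add_zero] at this
  have hBP : ∀ v ∈ B, v ∈ P := by intro v hv; rw [hB] at hv; exact hv.1
  have border : ∀ x c : V, x ∈ P → c ∉ P → G.Adj x c → x ∈ B ∧ c ∈ Vcut := by
    intro x c hx hc hadj
    have hcV : c ∈ Vcut := by
      rcases hpart c with ⟨hA, hnB, hnV⟩ | ⟨hBc, hnA, hnV⟩ | ⟨hV, -, -⟩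
      · rcases hP with rfl | rfl
        · exact absurd hA hc
        · exact absurd hadj.symm (hsep c hA x hx)
      · rcases hP with rfl | rfl
        · exact absurd hadj (hsep x hx c hBc)
        · exact absurd hBc hc
      · exact hV
    refine ⟨?_, hcV⟩
    rw [hB]; exact ⟨hx, c, hcV, hadj⟩
  have wt'le : ∀ u v : V, G.Adj u v → wt' u v ≤ wt u v := by
    intro u v h
    by_cases hb : u ∈ B ∧ v ∈ B
    · rw [hwt'B u v hb.1 hb.2]; exact dadj u v h
    · rw [hwt'E u v hb]
  have wt'symm : ∀ u v : V, wt' u v = wt' v u := by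
    intro u v
    by_cases hb : u ∈ B ∧ v ∈ B
    · rw [hwt'B u v hb.1 hb.2, hwt'B v u hb.2 hb.1, dsymm]
    · rw [hwt'E u v hb, hwt'E v u (fun h => hb ⟨h.2, h.1⟩), hwsymm]
  have adjP : ∀ u v : V, G.Adj u v → u ∈ P → v ∈ P → G'.Adj u v := by
    intro u v h hu hv
    exact (hG' u v).2 ⟨h.ne, Or.inl ⟨h, hu, hv⟩⟩
  -- Lemma B : walks staying inside P can be transferred to G'
  have lemB : ∀ (u v : V) (p : G.Walk u v), (∀ w ∈ p.support, w ∈ P) →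
      ∃ q : G'.Walk u v, walkWeight wt' q ≤ walkWeight wt p := by
    intro u v p
    induction p with
    | nil =>
      intro _
      exact ⟨SimpleGraph.Walk.nil, by simp [RedAux.walkWeight_nil]⟩
    | cons h p ih =>
      intro hsupp
      rw [SimpleGraph.Walk.support_cons] at hsupp
      have hu : _ ∈ P := hsupp _ List.mem_cons_self
      have hrest : ∀ w ∈ p.support, w ∈ P := fun w hw => hsupp w (List.mem_cons_of_mem _ hw)
      have hv2 : _ ∈ P := hrest _ p.start_mem_support
      obtain ⟨q, hq⟩ := ih hrest
      refine ⟨SimpleGraph.Walk.cons (adjP _ _ h hu hv2) q, ?_⟩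
      rw [RedAux.walkWeight_cons, RedAux.walkWeight_cons]
      exact add_le_add (wt'le _ _ h) hq
  -- replacement walks for the omitted shortcut
  have hscut : ∀ (c v : V), ((c = b₁ ∧ v = b₂) ∨ (c = b₂ ∧ v = b₁)) →
      ∃ r : G'.Walk c v, walkWeight wt' r ≤ d c v := by
    have main : ∃ r : G'.Walk b₁ b₂, walkWeight wt' r ≤ d b₁ b₂ := by
      rcases hredundant with hi | ⟨b₃, hb₃, h31, h32, heq⟩
      · obtain ⟨p, hpP, hpw⟩ := (hdP b₁ (hBP _ hb₁) b₂ (hBP _ hb₂)).1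
        obtain ⟨q, hq⟩ := lemB _ _ p hpP
        exact ⟨q, by rw [← hi, ← hpw]; exact hq⟩
      · have a13 : G'.Adj b₁ b₃ := (hG' b₁ b₃).2 ⟨h31.symm, Or.inr ⟨hb₁, hb₃, by
          rintro (⟨-, h⟩ | ⟨h, -⟩); exacts [h32 h, hb12 h]⟩⟩
        have a32 : G'.Adj b₃ b₂ := (hG' b₃ b₂).2 ⟨h32, Or.inr ⟨hb₃, hb₂, by
          rintro (⟨h, -⟩ | ⟨-, h⟩); exacts [h31 h, hb12 h.symm]⟩⟩
        refine ⟨SimpleGraph.Walk.cons a13 (SimpleGraph.Walk.cons a32 SimpleGraph.Walk.nil), ?_⟩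
        rw [RedAux.walkWeight_cons, RedAux.walkWeight_cons, RedAux.walkWeight_nil,
          hwt'B _ _ hb₁ hb₃, hwt'B _ _ hb₃ hb₂, heq]
        linarith
    intro c v hcv
    rcases hcv with ⟨rfl, rfl⟩ | ⟨rfl, rfl⟩
    · exact main
    · obtain ⟨r, hr⟩ := main
      refine ⟨r.reverse, ?_⟩
      rw [RedAux.walkWeight_reverse wt' wt'symm, dsymm]
      exact hr
  -- Key lemma : any G-walk ending in P can be transferred to G'
  have key : ∀ n : ℕ, ∀ c y : V, y ∈ P → ∀ p : G.Walk c y, p.length ≤ n →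
      (c ∈ P → ∃ q : G'.Walk c y, walkWeight wt' q ≤ walkWeight wt p) ∧
      (c ∉ P → ∃ v ∈ B, ∃ q : G'.Walk v y, d c v + walkWeight wt' q ≤ walkWeight wt p) := by
    intro n
    induction n with
    | zero =>
      intro c y hy p hlen
      cases p with
      | nil =>
        constructor
        · intro _; exact ⟨SimpleGraph.Walk.nil, by simp [RedAux.walkWeight_nil]⟩
        · intro hc; exact absurd hy hc
      | cons h p' => simp [SimpleGraph.Walk.length_cons] at hlen
    | succ n ih =>
      intro c y hy p hlen
      cases p with
      | nil =>
        constructor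
        · intro _; exact ⟨SimpleGraph.Walk.nil, by simp [RedAux.walkWeight_nil]⟩
        · intro hc; exact absurd hy hc
      | cons h p' =>
        rename_i c'
        have hlen' : p'.length ≤ n := by
          simp [SimpleGraph.Walk.length_cons] at hlen; omega
        have IH := ih c' y hy p' hlen'
        constructor
        · intro hc
          rw [RedAux.walkWeight_cons]
          by_cases hc' : c' ∈ P
          · obtain ⟨q, hq⟩ := IH.1 hc'
            refine ⟨SimpleGraph.Walk.cons (adjP _ _ h hc hc') q, ?_⟩
            rw [RedAux.walkWeight_cons]
            exact add_le_add (wt'le _ _ h) hq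
          · obtain ⟨hcB, -⟩ := border c c' hc hc' h
            obtain ⟨v, hvB, q, hq⟩ := IH.2 hc'
            have hdcv : d c v ≤ wt c c' + d c' v :=
              le_trans (dtri c c' v) (add_le_add (dadj _ _ h) le_rfl)
            by_cases hcv : c = v
            · subst hcv
              refine ⟨q, ?_⟩
              linarith [dnonneg c' c, hwpos c c' h]
            · by_cases hforb : (c = b₁ ∧ v = b₂) ∨ (c = b₂ ∧ v = b₁)
              · obtain ⟨r, hr⟩ := hscut c v hforb
                refine ⟨r.append q, ?_⟩
                rw [RedAux.walkWeight_append]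
                linarith
              · have a : G'.Adj c v := (hG' c v).2 ⟨hcv, Or.inr ⟨hcB, hvB, hforb⟩⟩
                refine ⟨SimpleGraph.Walk.cons a q, ?_⟩
                rw [RedAux.walkWeight_cons, hwt'B _ _ hcB hvB]
                linarith
        · intro hc
          rw [RedAux.walkWeight_cons]
          by_cases hc' : c' ∈ P
          · have hc'B : c' ∈ B := (border c' c hc' hc h.symm).1
            obtain ⟨q, hq⟩ := IH.1 hc'
            exact ⟨c', hc'B, q, by linarith [dadj c c' h]⟩
          · obtain ⟨v, hvB, q, hq⟩ := IH.2 hc'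
            refine ⟨v, hvB, q, ?_⟩
            have := dtri c c' v
            linarith [dadj c c' h]
  -- lower bound : every G'-walk weighs at least the G-distance
  have low : ∀ {x y : V} (q : G'.Walk x y), d x y ≤ walkWeight wt' q := by
    intro x y q
    induction q with
    | nil =>
      rename_i u
      simpa [RedAux.walkWeight_nil] using dle (SimpleGraph.Walk.nil : G.Walk u u)
    | @cons a b c' hab q ih =>
      rw [RedAux.walkWeight_cons]
      have h1 : d a b ≤ wt' a b := by
        rcases ((hG' a b).1 hab).2 with ⟨hg, -, -⟩ | ⟨hB1, hB2, -⟩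
        · by_cases hb : a ∈ B ∧ b ∈ B
          · rw [hwt'B _ _ hb.1 hb.2]
          · rw [hwt'E _ _ hb]; exact dadj _ _ hg
        · rw [hwt'B _ _ hB1 hB2]
      calc d a c' ≤ d a b + d b c' := dtri a b c'
        _ ≤ wt' a b + walkWeight wt' q := add_le_add h1 ih
  intro x hx y hy
  obtain ⟨p, hp⟩ := dmem x y
  obtain ⟨q, hq⟩ := (key p.length x y hy p le_rfl).1 hx
  have h1 : dP' x y ≤ d x y := by
    have h2 := (hdP' x hx y hy).2 ⟨q, rfl⟩
    linarith [hp.le, hp.ge]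
  have h2 : d x y ≤ dP' x y := by
    obtain ⟨q', hq'⟩ := (hdP' x hx y hy).1
    calc d x y ≤ walkWeight wt' q' := low q'
      _ = dP' x y := hq'
  linarith
end

section
/- For any vertex cut V_cut of a finite positively-weighted graph G and any vertex v ∉ V_cut, define L*(v) = { u ∈ V_cut : there is no u' ∈ V_cut \ {u} with d_G(u,v) = d_G(u,u') + d_G(u',v) }. Then every labelling L assigning to each v a subset of V_cut such that, for all u ∈ V_cut and v ∉ V_cut, d_G(u,v) = min{ d_G(u,u') + d_G(u',v) : u' ∈ L(v) } (where d_G(u,u) = 0 is allowed, i.e. u itself may be in L(v)) must satisfy L*(v) ⊆ L(v). -/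
/-- The cut cover `L*` is contained in every valid labelling: if for every cut vertex `u`
and non-cut vertex `v` the distance `d(u,v)` equals the minimum over `u' ∈ L(v)` of
`d(u,u') + d(u',v)`, then every `u ∈ Vcut` admitting no intermediate cut vertex `u'` on a
shortest `u`–`v` path must belong to `L(v)`. -/
theorem cut_cover_subset_valid_labelling {V : Type*} [DecidableEq V] (d : V → V → ℝ)
    (htri : ∀ a b c : V, d a c ≤ d a b + d b c)
    (hsymm : ∀ a b : V, d a b = d b a)
    (hrefl : ∀ a : V, d a a = 0)
    (Vcut : Finset V) (L : V → Finset V) (hsub : ∀ v, L v ⊆ Vcut)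
    (hne : ∀ v, (L v).Nonempty)
    (hvalid : ∀ u ∈ Vcut, ∀ v, v ∉ Vcut →
      d u v = (L v).inf' (hne v) (fun u' => d u u' + d u' v)) :
    ∀ v, v ∉ Vcut → ∀ u ∈ Vcut,
      (¬ ∃ u' ∈ Vcut, u' ≠ u ∧ d u v = d u u' + d u' v) → u ∈ L v := by
  intro v hv u hu hno
  by_contra huL
  obtain ⟨u', hu'L, hmin⟩ := Finset.exists_mem_eq_inf' (hne v) (fun u' => d u u' + d u' v)
  have hval := hvalid u hu v hv
  rw [hmin] at hval
  exact hno ⟨u', hsub v hu'L, fun h => huL (h ▸ hu'L), hval⟩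
end

section
/- With tail pruning as defined (a cut vertex v_i is removed from L(u) only if some strictly lower-ranked cut vertex v_j lies on a shortest path between v_i and u, and all higher-ranked cut vertices are also removed), the remaining labels still satisfy: for every u and every v_i ∈ V_cut, d_G(u, v_i) = min{ d_G(u, v_j) + d_G(v_j, v_i) : v_j ∈ L(u) after pruning }. In particular, tail pruning preserves the 2-hop cover property with respect to the cut: for any two vertices s, t separated by V_cut, d_G(s,t) = min{ d_{L(s)}(s,c) + d_{L(t)}(t,c) } can still be computed where each pruned distance is recovered through a retained lower-ranked cut vertex. -/
/-- Key recovery lemma: for every cut vertex `v i`, some retained `v j` satisfies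
`d s (v i) = d s (v j) + d (v j) (v i)`. -/
lemma retain_exists {V : Type*} (d : V → V → ℝ)
    (htri : ∀ a b c : V, d a c ≤ d a b + d b c)
    (hsymm : ∀ a b : V, d a b = d b a)
    (hrefl : ∀ a : V, d a a = 0)
    (n : ℕ) (v : Fin (n + 1) → V) (s : V)
    (pruned : Fin (n + 1) → Prop)
    (hchar : ∀ i, pruned i → ∃ j, j < i ∧ d (v i) s = d (v i) (v j) + d (v j) s) :
    ∀ i, ∃ j, ¬ pruned j ∧ d s (v i) = d s (v j) + d (v j) (v i) := by
  have main : ∀ m : ℕ, ∀ i : Fin (n + 1), i.val ≤ m →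
      ∃ j, ¬ pruned j ∧ d s (v i) = d s (v j) + d (v j) (v i) := by
    intro m
    induction m with
    | zero =>
      intro i hi
      by_cases h : pruned i
      · obtain ⟨j, hj, _⟩ := hchar i h
        omega
      · exact ⟨i, h, by rw [hrefl]; ring⟩
    | succ m ih =>
      intro i hi
      by_cases h : pruned i
      · obtain ⟨j, hj, hd⟩ := hchar i h
        have hjm : j.val ≤ m := by omega
        obtain ⟨k, hk, hdk⟩ := ih j hjm
        refine ⟨k, hk, le_antisymm (htri s (v k) (v i)) ?_⟩
        have h1 : d (v k) (v i) ≤ d (v k) (v j) + d (v j) (v i) := htri _ _ _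
        have h2 : d s (v i) = d s (v j) + d (v j) (v i) := by
          rw [hsymm s (v i), hsymm s (v j), hsymm (v j) (v i)] at *
          linarith [hd]
        linarith
      · exact ⟨i, h, by rw [hrefl]; ring⟩
  exact fun i => main i.val i le_rfl

/-- Tail pruning preserves distance recovery and the 2-hop cover property: every distance
from `s` to a cut vertex `v i` is the minimum, over retained (non-pruned) entries `v j`,
of `d s (v j) + d (v j) (v i)`; and if some cut vertex lies on a shortest `s`–`t` path then
`d s t` is the minimum over retained entries of both labels of the 3-hop sums. -/
theorem tail_pruning_preserves_cover {V : Type*} (d : V → V → ℝ)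
    (htri : ∀ a b c : V, d a c ≤ d a b + d b c)
    (hsymm : ∀ a b : V, d a b = d b a)
    (hrefl : ∀ a : V, d a a = 0)
    (n : ℕ) (v : Fin (n + 1) → V) (s t : V)
    (prunedS prunedT : Fin (n + 1) → Prop)
    (hcharS : ∀ i, prunedS i ↔
      ((∃ j, j < i ∧ d (v i) s = d (v i) (v j) + d (v j) s) ∧ ∀ k, i < k → prunedS k))
    (hcharT : ∀ i, prunedT i ↔
      ((∃ j, j < i ∧ d (v i) t = d (v i) (v j) + d (v j) t) ∧ ∀ k, i < k → prunedT k)) :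
    (∀ i : Fin (n + 1),
      IsLeast {r : ℝ | ∃ j, ¬ prunedS j ∧ r = d s (v j) + d (v j) (v i)} (d s (v i))) ∧
    ((∃ i, d s t = d s (v i) + d (v i) t) →
      IsLeast {r : ℝ | ∃ j k, ¬ prunedS j ∧ ¬ prunedT k ∧
        r = d s (v j) + d (v j) (v k) + d (v k) t} (d s t)) := by
  have keyS := retain_exists d htri hsymm hrefl n v s prunedS
    (fun i hi => ((hcharS i).1 hi).1)
  have keyT := retain_exists d htri hsymm hrefl n v t prunedT
    (fun i hi => ((hcharT i).1 hi).1)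
  constructor
  · intro i
    obtain ⟨j, hj, hdj⟩ := keyS i
    refine ⟨⟨j, hj, hdj⟩, ?_⟩
    rintro r ⟨k, _, rfl⟩
    exact htri s (v k) (v i)
  · rintro ⟨i, hi⟩
    obtain ⟨j, hj, hdj⟩ := keyS i
    obtain ⟨k, hk, hdk⟩ := keyT i
    constructor
    · refine ⟨j, k, hj, hk, le_antisymm ?_ ?_⟩
      · have h1 := htri s (v j) (v k)
        have h2 := htri s (v k) t
        linarith
      · calc d s (v j) + d (v j) (v k) + d (v k) t
            ≤ d s (v j) + (d (v j) (v i) + d (v i) (v k)) + d (v k) t := by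
              have := htri (v j) (v i) (v k); linarith
          _ = d s (v j) + d (v j) (v i) + (d (v i) t) := by
              rw [hsymm (v i) t, hdk, hsymm (v i) (v k), hsymm t (v k)]; ring
          _ = d s t := by rw [hi, hdj]
    · rintro r ⟨a, b, _, _, rfl⟩
      have h1 := htri s (v a) (v b)
      have h2 := htri s (v b) t
      linarith
end

section
/- Symmetrically, the set P'_B = { v ∈ V : pw(v) ≥ w_B } containing v_B is connected, where pw(v) = d_G(v_A,v) − d_G(v_B,v): every vertex on any shortest path from v_B to some v ∈ P'_B has partition weight at least pw(v). -/
private lemma walkWeight_append {V : Type*} {G : SimpleGraph V} (wt : V → V → ℝ) {u v w : V}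
    (p : G.Walk u v) (q : G.Walk v w) :
    walkWeight wt (p.append q) = walkWeight wt p + walkWeight wt q := by
  simp [walkWeight, SimpleGraph.Walk.darts_append]

private lemma reachable_induce {V : Type*} {G : SimpleGraph V} {S : Set V} {a b : V}
    (p : G.Walk a b) (hp : ∀ u ∈ p.support, u ∈ S) :
    (G.induce S).Reachable ⟨a, hp a p.start_mem_support⟩ ⟨b, hp b p.end_mem_support⟩ := by
  induction p with
  | nil => exact SimpleGraph.Reachable.refl _
  | @cons a c b h q ih =>
    have hq : ∀ u ∈ q.support, u ∈ S := fun u hu =>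
      hp u (by simp [SimpleGraph.Walk.support_cons, hu])
    have ha : a ∈ S := hp a (SimpleGraph.Walk.start_mem_support _)
    have hadj : (G.induce S).Adj ⟨a, ha⟩ ⟨c, hq c q.start_mem_support⟩ := h
    exact hadj.reachable.trans (ih hq)

/-- Symmetrically, with partition weight `pw v = d(v_A,v) − d(v_B,v)`, the superlevel set
`P'_B = {v | pw v ≥ w_B}` containing `v_B` is connected: every vertex `u` on any shortest
path from `v_B` to a vertex `v ∈ P'_B` satisfies `pw u ≥ pw v ≥ w_B`, and the induced
subgraph on `P'_B` is connected. -/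
theorem upper_partition_connected {V : Type*} [Fintype V] (G : SimpleGraph V)
    (wt : V → V → ℝ)
    (hwpos : ∀ u v, G.Adj u v → 0 < wt u v)
    (hwsymm : ∀ u v, wt u v = wt v u)
    (d : V → V → ℝ)
    (hd : ∀ x y : V, IsLeast {r : ℝ | ∃ p : G.Walk x y, walkWeight wt p = r} (d x y))
    (vA vB : V) (wB : ℝ)
    (hvB : wB ≤ d vA vB - d vB vB) :
    (∀ v : V, wB ≤ d vA v - d vB v →
      ∀ p : G.Walk vB v, walkWeight wt p = d vB v →
        ∀ u ∈ p.support, d vA v - d vB v ≤ d vA u - d vB u ∧ wB ≤ d vA u - d vB u) ∧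
    (G.induce {v : V | wB ≤ d vA v - d vB v}).Connected := by
  have key : ∀ v : V, ∀ p : G.Walk vB v, walkWeight wt p = d vB v →
      ∀ u ∈ p.support, d vA v - d vB v ≤ d vA u - d vB u := by
    intro v p hp u hu
    haveI := Classical.decEq V
    obtain ⟨pA, hpA⟩ := (hd vA u).1
    have hsplit : walkWeight wt (p.takeUntil u hu) + walkWeight wt (p.dropUntil u hu)
        = d vB v := by
      rw [← walkWeight_append]
      rw [← SimpleGraph.Walk.take_spec p hu] at hp
      exact hp
    have h1 : d vA v ≤ d vA u + walkWeight wt (p.dropUntil u hu) := by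
      have hm : d vA u + walkWeight wt (p.dropUntil u hu)
          ∈ {r : ℝ | ∃ q : G.Walk vA v, walkWeight wt q = r} :=
        ⟨pA.append (p.dropUntil u hu), by rw [walkWeight_append, hpA]⟩
      exact (hd vA v).2 hm
    have h2 : d vB u ≤ walkWeight wt (p.takeUntil u hu) :=
      (hd vB u).2 ⟨p.takeUntil u hu, rfl⟩
    linarith
  constructor
  · intro v hv p hp u hu
    exact ⟨key v p hp u hu, le_trans hv (key v p hp u hu)⟩
  · have hvBS : vB ∈ {v : V | wB ≤ d vA v - d vB v} := hvB
    haveI : Nonempty {v : V | wB ≤ d vA v - d vB v} := ⟨⟨vB, hvBS⟩⟩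
    have hreach : ∀ x : {v : V | wB ≤ d vA v - d vB v},
        (G.induce {v : V | wB ≤ d vA v - d vB v}).Reachable ⟨vB, hvBS⟩ x := by
      rintro ⟨x, hx⟩
      obtain ⟨p, hp⟩ := (hd vB x).1
      have hsup : ∀ u ∈ p.support, u ∈ {v : V | wB ≤ d vA v - d vB v} :=
        fun u hu => le_trans hx (key x p hp u hu)
      exact reachable_induce p hsup
    exact ⟨fun x y => (hreach x).symm.trans (hreach y)⟩
end

section
/- Menger's theorem for vertex cuts via vertex splitting: let G be a finite graph with distinguished non-adjacent vertices S and T, and construct the directed flow network G' where each vertex v ∉ {S,T} is split into v_in and v_out joined by an edge of capacity 1, and each edge (u,v) of G yields edges u_out → v_in and v_out → u_in of infinite capacity. Then the maximum S–T flow value in G' equals the minimum number of vertices (other than S and T) whose removal disconnects S from T in G. -/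
open scoped Classical

/-- Capacities of the vertex-splitting flow network: each vertex `v` is split into an
in-copy `Sum.inl v` and an out-copy `Sum.inr v`, joined by an internal edge of capacity
`1` (capacity `⊤` for `S` and `T`); each edge `(u,v)` of `G` yields edges
`u_out → v_in` (and `v_out → u_in`) of infinite capacity. -/
noncomputable def splitCap {V : Type*} (G : SimpleGraph V) (S T : V) :
    V ⊕ V → V ⊕ V → ℕ∞ :=
  fun x y =>
    match x, y with
    | Sum.inl u, Sum.inr v =>
        if u = v then (if u = S ∨ u = T then ⊤ else 1) else 0
    | Sum.inr u, Sum.inl v => if G.Adj u v then ⊤ else 0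
    | _, _ => 0

/-- A feasible flow in the split network, with source `S_in` and sink `T_out`. -/
def IsSplitFlow {V : Type*} [Fintype V] (G : SimpleGraph V) (S T : V)
    (f : V ⊕ V → V ⊕ V → ℕ) : Prop :=
  (∀ x y, (f x y : ℕ∞) ≤ splitCap G S T x y) ∧
  (∀ x : V ⊕ V, x ≠ Sum.inl S → x ≠ Sum.inr T → ∑ y, f y x = ∑ y, f x y) ∧
  (∀ y, f y (Sum.inl S) = 0) ∧ (∀ y, f (Sum.inr T) y = 0)



private lemma exists_nodup_chain_aux {α : Type*} {r : α → α → Prop} {a b : α}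
    (h : Relation.ReflTransGen r a b) :
    ∃ l : List α, List.Chain r a l ∧ (a :: l).getLast? = some b ∧ (a :: l).Nodup := by
  induction h with
  | refl => exact ⟨[], List.Chain.nil, rfl, List.nodup_singleton a⟩
  | @tail b c h' hbc ih =>
    obtain ⟨l, hch, hlast, hnd⟩ := ih
    by_cases hc : c ∈ a :: l
    · obtain ⟨s, t, hst⟩ := List.append_of_mem hc
      have hch' : List.Chain' r (a :: l) := hch
      rcases s with _ | ⟨a', s'⟩
      · simp only [List.nil_append, List.cons.injEq] at hst
        exact ⟨[], List.Chain.nil, by simp [hst.1], List.nodup_singleton a⟩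
      · simp only [List.cons_append, List.cons.injEq] at hst
        obtain ⟨ha, hl⟩ := hst
        have hpref : (a :: (s' ++ [c])) <+: (a :: l) := by
          refine ⟨t, ?_⟩
          simp [hl, ha]
        refine ⟨s' ++ [c], ?_, ?_, ?_⟩
        · exact hch'.prefix hpref
        · rw [show a :: (s' ++ [c]) = (a :: s') ++ [c] by simp]
          exact List.getLast?_concat
        · exact hnd.sublist hpref.sublist
    · refine ⟨l ++ [c], ?_, ?_, ?_⟩
      · have h2 : List.Chain' r ((a :: l) ++ [c]) := by
          rw [List.Chain', List.isChain_append]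
          refine ⟨hch, List.isChain_singleton c, ?_⟩
          intro x hx y hy
          rw [hlast] at hx
          simp only [List.head?_cons, Option.mem_def, Option.some.injEq] at hx hy
          subst hx; subst hy; exact hbc
        exact h2
      · rw [show a :: (l ++ [c]) = (a :: l) ++ [c] by simp]
        exact List.getLast?_concat
      · rw [show a :: (l ++ [c]) = (a :: l) ++ [c] by simp]
        rw [List.nodup_append]
        refine ⟨hnd, List.nodup_singleton c, ?_⟩
        intro x hx y hy hxy
        simp only [List.mem_singleton] at hy
        subst hy; subst hxy; exact hc hx

section Menger

variable {V : Type*} [Fintype V] [DecidableEq V] (G : SimpleGraph V) (S T : V)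

private lemma cross_eq (f : V ⊕ V → V ⊕ V → ℕ) (hf : IsSplitFlow G S T f)
    (A : Finset (V ⊕ V)) (hSA : Sum.inl S ∈ A) (hTA : Sum.inr T ∉ A) :
    ∑ x ∈ A, ∑ y ∈ Aᶜ, f x y
      = (∑ y, f (Sum.inl S) y) + ∑ x ∈ A, ∑ y ∈ Aᶜ, f y x := by
  have key : ∀ x ∈ A, ∑ y, f x y
      = (if x = Sum.inl S then ∑ y, f (Sum.inl S) y else 0) + ∑ y, f y x := by
    intro x hx
    by_cases hxs : x = Sum.inl S
    · subst hxs
      simp [hf.2.2.1]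
    · have hxt : x ≠ Sum.inr T := fun h => hTA (h ▸ hx)
      rw [if_neg hxs, zero_add, hf.2.1 x hxs hxt]
  have h1 : ∑ x ∈ A, ∑ y, f x y
      = (∑ y, f (Sum.inl S) y) + ∑ x ∈ A, ∑ y, f y x := by
    rw [Finset.sum_congr rfl key, Finset.sum_add_distrib]
    congr 1
    rw [Finset.sum_ite_eq' A (Sum.inl S)]
    simp [hSA]
  have e1 : ∀ x ∈ A, ∑ y, f x y = ∑ y ∈ A, f x y + ∑ y ∈ Aᶜ, f x y :=
    fun x _ => (Finset.sum_add_sum_compl A _).symm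
  have e2 : ∀ x ∈ A, ∑ y, f y x = ∑ y ∈ A, f y x + ∑ y ∈ Aᶜ, f y x :=
    fun x _ => (Finset.sum_add_sum_compl A _).symm
  rw [Finset.sum_congr rfl e1, Finset.sum_congr rfl e2,
    Finset.sum_add_distrib, Finset.sum_add_distrib] at h1
  have hcomm : ∑ x ∈ A, ∑ y ∈ A, f x y = ∑ x ∈ A, ∑ y ∈ A, f y x := Finset.sum_comm
  omega

private noncomputable def bndFun (C : Finset V) : V ⊕ V → V ⊕ V → ℕ
  | Sum.inl u, Sum.inr v => if u = v ∧ u ∈ C then 1 else 0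
  | _, _ => 0

private lemma weak_duality (f : V ⊕ V → V ⊕ V → ℕ) (hf : IsSplitFlow G S T f)
    (C : Finset V) (hSC : S ∉ C) (hTC : T ∉ C)
    (hcut : ∀ p : G.Walk S T, ∃ v ∈ p.support, v ∈ C) :
    ∑ y, f (Sum.inl S) y ≤ C.card := by
  classical
  set step : V → V → Prop := fun u v => G.Adj u v ∧ u ∉ C with hstepdef
  set R : V → Prop := fun v => Relation.ReflTransGen step S v with hRdef
  have reach_walk : ∀ v, R v → v ∉ C → ∃ p : G.Walk S v, ∀ u ∈ p.support, u ∉ C := by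
    intro v hv
    induction hv with
    | refl =>
      intro _
      exact ⟨SimpleGraph.Walk.nil, by simp [hSC]⟩
    | @tail u w h' hstep ih =>
      intro hwC
      obtain ⟨p, hp⟩ := ih hstep.2
      refine ⟨p.concat hstep.1, ?_⟩
      intro z hz
      rw [SimpleGraph.Walk.support_concat, List.mem_append] at hz
      rcases hz with hz | hz
      · exact hp z hz
      · simp only [List.mem_singleton] at hz
        subst hz; exact hwC
  have hRT : ¬ R T := by
    intro hRT
    obtain ⟨p, hp⟩ := reach_walk T hRT hTC
    obtain ⟨v, hv1, hv2⟩ := hcut p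
    exact hp v hv1 hv2
  set A : Finset (V ⊕ V) :=
    Finset.univ.filter (fun x => Sum.elim (fun v => R v) (fun v => R v ∧ v ∉ C) x) with hAdef
  have hSA : Sum.inl S ∈ A := by
    simp [hAdef, hRdef]
    exact Relation.ReflTransGen.refl
  have hTA : Sum.inr T ∉ A := by
    simp [hAdef]
    intro h
    exact absurd h hRT
  have hval : ∑ y, f (Sum.inl S) y ≤ ∑ x ∈ A, ∑ y ∈ Aᶜ, f x y := by
    rw [cross_eq G S T f hf A hSA hTA]
    exact Nat.le_add_right _ _
  have hpt : ∀ x ∈ A, ∀ y ∈ Aᶜ, f x y ≤ bndFun C x y := by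
    intro x hx y hy
    rw [Finset.mem_compl] at hy
    rcases x with u | u <;> rcases y with v | v
    · have h0 := hf.1 (Sum.inl u) (Sum.inl v)
      simp [splitCap] at h0
      simp [bndFun, h0]
    · -- inl u → inr v
      by_cases huv : u = v
      · subst huv
        by_cases huC : u ∈ C
        · have hus : u ≠ S := fun h => hSC (h ▸ huC)
          have hut : u ≠ T := fun h => hTC (h ▸ huC)
          have h0 := hf.1 (Sum.inl u) (Sum.inr u)
          simp [splitCap, hus, hut] at h0
          have : f (Sum.inl u) (Sum.inr u) ≤ 1 := by exact_mod_cast h0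
          simpa [bndFun, huC] using this
        · exfalso
          have hRu : R u := by simpa [hAdef] using hx
          exact hy (by simp [hAdef]; exact ⟨hRu, huC⟩)
      · have h0 := hf.1 (Sum.inl u) (Sum.inr v)
        simp [splitCap, huv] at h0
        simp [bndFun, huv, h0]
    · -- inr u → inl v
      by_cases hadj : G.Adj u v
      · exfalso
        have hx' : R u ∧ u ∉ C := by simpa [hAdef] using hx
        have hRv : R v := hx'.1.tail ⟨hadj, hx'.2⟩
        exact hy (by simpa [hAdef] using hRv)
      · have h0 := hf.1 (Sum.inr u) (Sum.inl v)
        simp [splitCap, hadj] at h0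
        simp [bndFun, h0]
    · have h0 := hf.1 (Sum.inr u) (Sum.inr v)
      simp [splitCap] at h0
      simp [bndFun, h0]
  have hsum : ∑ x ∈ A, ∑ y ∈ Aᶜ, f x y ≤ ∑ x : V ⊕ V, ∑ y : V ⊕ V, bndFun C x y := by
    calc ∑ x ∈ A, ∑ y ∈ Aᶜ, f x y
        ≤ ∑ x ∈ A, ∑ y ∈ Aᶜ, bndFun C x y :=
          Finset.sum_le_sum (fun x hx => Finset.sum_le_sum (fun y hy => hpt x hx y hy))
      _ ≤ ∑ x ∈ A, ∑ y : V ⊕ V, bndFun C x y :=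
          Finset.sum_le_sum (fun x _ => Finset.sum_le_sum_of_subset (Finset.subset_univ _))
      _ ≤ ∑ x : V ⊕ V, ∑ y : V ⊕ V, bndFun C x y :=
          Finset.sum_le_sum_of_subset (Finset.subset_univ _)
  have hbnd : ∑ x : V ⊕ V, ∑ y : V ⊕ V, bndFun C x y = C.card := by
    rw [Fintype.sum_sum_type]
    have h2 : ∀ u : V, ∑ y : V ⊕ V, bndFun C (Sum.inr u) y = 0 := by
      intro u; apply Finset.sum_eq_zero; intro y _
      rcases y with v | v <;> simp [bndFun]
    have h1 : ∀ u : V, ∑ y : V ⊕ V, bndFun C (Sum.inl u) y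
        = if u ∈ C then 1 else 0 := by
      intro u
      rw [Fintype.sum_sum_type]
      have ha : ∑ v : V, bndFun C (Sum.inl u) (Sum.inl v) = 0 := by
        apply Finset.sum_eq_zero; intro v _; simp [bndFun]
      have hb : ∑ v : V, bndFun C (Sum.inl u) (Sum.inr v) = if u ∈ C then 1 else 0 := by
        have : ∀ v : V, bndFun C (Sum.inl u) (Sum.inr v)
            = if u = v then (if u ∈ C then 1 else 0) else 0 := by
          intro v; simp [bndFun, ite_and]
        rw [Finset.sum_congr rfl (fun v _ => this v), Finset.sum_ite_eq]
        simp
      rw [ha, hb, zero_add]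
    rw [Finset.sum_congr rfl (fun u _ => h1 u), Finset.sum_congr rfl (fun u _ => h2 u)]
    simp [Finset.sum_ite_mem]
  calc ∑ y, f (Sum.inl S) y ≤ ∑ x ∈ A, ∑ y ∈ Aᶜ, f x y := hval
    _ ≤ ∑ x : V ⊕ V, ∑ y : V ⊕ V, bndFun C x y := hsum
    _ = C.card := hbnd

end Menger

private lemma sum_ite_add {W : Type*} [Fintype W] [DecidableEq W] (h : W → ℕ) (p : W) :
    ∑ a, (if a = p then h a + 1 else h a) = (∑ a, h a) + 1 := by
  have e : ∀ a, (if a = p then h a + 1 else h a) = h a + (if a = p then 1 else 0) := by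
    intro a; split_ifs <;> simp
  rw [Finset.sum_congr rfl (fun a _ => e a), Finset.sum_add_distrib]
  congr 1
  rw [Finset.sum_ite_eq' Finset.univ p (fun _ => 1)]
  simp

private lemma sum_ite_sub {W : Type*} [Fintype W] [DecidableEq W] (h : W → ℕ) (p : W)
    (hp : 1 ≤ h p) :
    ∑ a, (if a = p then h a - 1 else h a) + 1 = ∑ a, h a := by
  have e : ∀ a, h a = (if a = p then h a - 1 else h a) + (if a = p then 1 else 0) := by
    intro a; split_ifs with h1
    · subst h1; omega
    · simp
  conv_rhs => rw [Finset.sum_congr rfl (fun a _ => e a)]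
  rw [Finset.sum_add_distrib]
  congr 1
  rw [Finset.sum_ite_eq' Finset.univ p (fun _ => 1)]
  simp

section Menger2

variable {V : Type*} [Fintype V] [DecidableEq V] (G : SimpleGraph V) (S T : V)

private def splitRes (f : V ⊕ V → V ⊕ V → ℕ) (x y : V ⊕ V) : Prop :=
  (f x y : ℕ∞) < splitCap G S T x y ∨ 0 < f y x

private lemma augment_aux (f : V ⊕ V → V ⊕ V → ℕ) (hfT : ∀ b, f (Sum.inr T) b = 0) :
    ∀ (l : List (V ⊕ V)) (y : V ⊕ V),
    List.Chain (splitRes G S T f) y l → (y :: l).getLast? = some (Sum.inr T) →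
    (y :: l).Nodup → Sum.inl S ∉ (y :: l) →
    (∃ g : V ⊕ V → V ⊕ V → ℕ,
      (∀ a b, (g a b : ℕ∞) ≤ splitCap G S T a b) ∧
      (∀ a, g a (Sum.inl S) = 0) ∧
      (∀ b, g (Sum.inr T) b = 0) ∧
      (∀ x, x ≠ Sum.inl S → x ≠ Sum.inr T → x ≠ y → ∑ a, g a x = ∑ a, g x a) ∧
      (∑ a, g (Sum.inl S) a = (∑ a, f (Sum.inl S) a) + 1) ∧
      (y ≠ Sum.inr T → ∑ a, g a y = (∑ a, g y a) + 1) ∧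
      (∀ a b, a ∈ l ∨ b ∈ l → g a b = f a b)) →
    ∃ g, IsSplitFlow G S T g ∧ ∑ a, g (Sum.inl S) a = (∑ a, f (Sum.inl S) a) + 1 := by
  intro l
  induction l with
  | nil =>
    intro y _ hlast _ _ hg
    obtain ⟨g, hb, hzS, hzT, hcons, hval, _, _⟩ := hg
    have hy : y = Sum.inr T := by simpa using hlast
    subst hy
    exact ⟨g, ⟨hb, fun x h1 h2 => hcons x h1 h2 h2, hzS, hzT⟩, hval⟩
  | cons z l' ih =>
    intro y hch hlast hnd hS hg
    obtain ⟨g, hb, hgS, hgT, hcons, hval, hdef, hagree⟩ := hg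
    rw [List.Chain, List.chain_cons] at hch
    obtain ⟨hres, hch'⟩ := hch
    have hynl : y ∉ z :: l' := (List.nodup_cons.mp hnd).1
    have hnd' : (z :: l').Nodup := (List.nodup_cons.mp hnd).2
    have hznl : z ∉ l' := (List.nodup_cons.mp hnd').1
    have hyz : y ≠ z := fun h => hynl (h ▸ (List.mem_cons_self (a := z) (l := l')))
    have hlast' : (z :: l').getLast? = some (Sum.inr T) := by
      rw [List.getLast?_cons_cons] at hlast; exact hlast
    have hTin : Sum.inr T ∈ z :: l' := by
      obtain ⟨hn, he⟩ := List.mem_getLast?_eq_getLast (l := z :: l') (x := Sum.inr T) hlast'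
      exact he ▸ List.getLast_mem hn
    have hyT : y ≠ Sum.inr T := fun h => hynl (h ▸ hTin)
    have hSz : Sum.inl S ∉ z :: l' := fun h => hS (List.mem_cons_of_mem y h)
    have hyS : y ≠ Sum.inl S := fun h => hS (h ▸ (List.mem_cons_self (a := y)))
    have hzS' : z ≠ Sum.inl S := fun h => hSz (h ▸ (List.mem_cons_self (a := z) (l := l')))
    have hgyz : g y z = f y z := hagree y z (Or.inr ((List.mem_cons_self (a := z) (l := l'))))
    have hgzy : g z y = f z y := hagree z y (Or.inl ((List.mem_cons_self (a := z) (l := l'))))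
    have hdefy : ∑ a, g a y = (∑ a, g y a) + 1 := hdef hyT
    by_cases hfw : (f y z : ℕ∞) < splitCap G S T y z
    · -- forward augmentation on edge (y, z)
      set g' : V ⊕ V → V ⊕ V → ℕ :=
        fun a b => if a = y ∧ b = z then g a b + 1 else g a b with hg'def
      have hcol : ∀ x, x ≠ z → ∀ a, g' a x = g a x := by
        intro x hx a
        simp only [hg'def]
        rw [if_neg (fun h => hx h.2)]
      have hrow : ∀ x, x ≠ y → ∀ a, g' x a = g x a := by
        intro x hx a
        simp only [hg'def]
        rw [if_neg (fun h => hx h.1)]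
      have hcolz : ∑ a, g' a z = (∑ a, g a z) + 1 := by
        have e : ∀ a, g' a z = if a = y then g a z + 1 else g a z := by
          intro a; simp only [hg'def]
          by_cases h : a = y <;> simp [h]
        rw [Finset.sum_congr rfl (fun a _ => e a)]
        exact sum_ite_add (fun a => g a z) y
      have hrowy : ∑ a, g' y a = (∑ a, g y a) + 1 := by
        have e : ∀ a, g' y a = if a = z then g y a + 1 else g y a := by
          intro a; simp only [hg'def]
          by_cases h : a = z <;> simp [h]
        rw [Finset.sum_congr rfl (fun a _ => e a)]
        exact sum_ite_add (fun a => g y a) z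
      refine ih z hch' hlast' hnd' hSz ⟨g', ?_, ?_, ?_, ?_, ?_, ?_, ?_⟩
      · intro a b
        simp only [hg'def]
        split_ifs with h
        · obtain ⟨ha, hb'⟩ := h
          rw [ha, hb', hgyz]
          have e : ((f y z + 1 : ℕ) : ℕ∞) = (f y z : ℕ∞) + 1 := by push_cast; ring
          rw [e]
          exact Order.add_one_le_of_lt hfw
        · exact hb a b
      · intro a
        have e : ¬(a = y ∧ Sum.inl S = z) := fun h => hzS' h.2.symm
        simp only [hg'def]
        rw [if_neg e]
        exact hgS a
      · intro b
        have e : ¬(Sum.inr T = y ∧ b = z) := fun h => hyT h.1.symm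
        simp only [hg'def]
        rw [if_neg e]
        exact hgT b
      · intro x hx1 hx2 hx3
        by_cases hxy : x = y
        · subst hxy
          rw [Finset.sum_congr rfl (fun a _ => hcol x hyz a), hrowy, hdefy]
        · rw [Finset.sum_congr rfl (fun a _ => hcol x hx3 a),
            Finset.sum_congr rfl (fun a _ => hrow x hxy a)]
          exact hcons x hx1 hx2 hxy
      · rw [Finset.sum_congr rfl (fun a _ => hrow (Sum.inl S) (Ne.symm hyS) a)]
        exact hval
      · intro hzT'
        rw [hcolz, Finset.sum_congr rfl (fun a _ => hrow z (Ne.symm hyz) a)]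
        rw [hcons z hzS' hzT' (Ne.symm hyz)]
      · intro a b hab
        have ha' : ¬(a = y ∧ b = z) := by
          rintro ⟨h1, h2⟩
          rcases hab with h | h
          · exact hynl (List.mem_cons_of_mem z (h1 ▸ h))
          · exact hznl (h2 ▸ h)
        simp only [hg'def]
        rw [if_neg ha']
        refine hagree a b ?_
        rcases hab with h | h
        · exact Or.inl (List.mem_cons_of_mem z h)
        · exact Or.inr (List.mem_cons_of_mem z h)
    · -- backward augmentation on edge (z, y)
      have hbk : 0 < f z y := by
        rcases hres with h | h
        · exact absurd h hfw
        · exact h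
      have hzT' : z ≠ Sum.inr T := by
        intro h
        rw [h, hfT] at hbk
        omega
      have hgzy1 : 1 ≤ g z y := by rw [hgzy]; omega
      set g' : V ⊕ V → V ⊕ V → ℕ :=
        fun a b => if a = z ∧ b = y then g a b - 1 else g a b with hg'def
      have hcol : ∀ x, x ≠ y → ∀ a, g' a x = g a x := by
        intro x hx a
        simp only [hg'def]
        rw [if_neg (fun h => hx h.2)]
      have hrow : ∀ x, x ≠ z → ∀ a, g' x a = g x a := by
        intro x hx a
        simp only [hg'def]
        rw [if_neg (fun h => hx h.1)]
      have hcoly : ∑ a, g' a y + 1 = ∑ a, g a y := by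
        have e : ∀ a, g' a y = if a = z then g a y - 1 else g a y := by
          intro a; simp only [hg'def]
          by_cases h : a = z <;> simp [h]
        rw [Finset.sum_congr rfl (fun a _ => e a)]
        exact sum_ite_sub (fun a => g a y) z hgzy1
      have hrowz : ∑ a, g' z a + 1 = ∑ a, g z a := by
        have e : ∀ a, g' z a = if a = y then g z a - 1 else g z a := by
          intro a; simp only [hg'def]
          by_cases h : a = y <;> simp [h]
        rw [Finset.sum_congr rfl (fun a _ => e a)]
        exact sum_ite_sub (fun a => g z a) y hgzy1
      refine ih z hch' hlast' hnd' hSz ⟨g', ?_, ?_, ?_, ?_, ?_, ?_, ?_⟩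
      · intro a b
        have hle : g' a b ≤ g a b := by
          simp only [hg'def]
          split_ifs
          · omega
          · exact le_rfl
        exact le_trans (by exact_mod_cast hle) (hb a b)
      · intro a
        have e : ¬(a = z ∧ Sum.inl S = y) := fun h => hyS h.2.symm
        simp only [hg'def]
        rw [if_neg e]
        exact hgS a
      · intro b
        have e : ¬(Sum.inr T = z ∧ b = y) := fun h => hzT' h.1.symm
        simp only [hg'def]
        rw [if_neg e]
        exact hgT b
      · intro x hx1 hx2 hx3
        by_cases hxy : x = y
        · subst hxy
          have h1 : ∑ a, g' x a = ∑ a, g x a :=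
            Finset.sum_congr rfl (fun a _ => hrow x hyz a)
          omega
        · rw [Finset.sum_congr rfl (fun a _ => hcol x hxy a),
            Finset.sum_congr rfl (fun a _ => hrow x hx3 a)]
          exact hcons x hx1 hx2 hxy
      · rw [Finset.sum_congr rfl (fun a _ => hrow (Sum.inl S) (Ne.symm hzS') a)]
        exact hval
      · intro _
        have h1 : ∑ a, g' a z = ∑ a, g a z :=
          Finset.sum_congr rfl (fun a _ => hcol z (Ne.symm hyz) a)
        have h2 : ∑ a, g a z = ∑ a, g z a := hcons z hzS' hzT' (Ne.symm hyz)
        omega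
      · intro a b hab
        have ha' : ¬(a = z ∧ b = y) := by
          rintro ⟨h1, h2⟩
          rcases hab with h | h
          · exact hznl (h1 ▸ h)
          · exact hynl (List.mem_cons_of_mem z (h2 ▸ h))
        simp only [hg'def]
        rw [if_neg ha']
        refine hagree a b ?_
        rcases hab with h | h
        · exact Or.inl (List.mem_cons_of_mem z h)
        · exact Or.inr (List.mem_cons_of_mem z h)

end Menger2

section Assemble

variable {V : Type*} [Fintype V] [DecidableEq V] (G : SimpleGraph V) (S T : V)

/-- every S-T walk has an internal vertex when S,T are distinct and non-adjacent -/
private lemma walk_internal (hST : ¬ G.Adj S T) (hne : S ≠ T) (p : G.Walk S T) :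
    ∃ v ∈ p.support, v ≠ S ∧ v ≠ T := by
  cases hp : p.reverse with
  | nil => exact absurd rfl hne
  | @cons u b w h q =>
    have hb1 : b ≠ T := fun hbe => G.irrefl (hbe ▸ h)
    have hb2 : b ≠ S := fun hbe => hST (hbe ▸ h).symm
    have hbmem : b ∈ p.reverse.support := by
      rw [hp, SimpleGraph.Walk.support_cons]
      exact List.mem_cons_of_mem _ q.start_mem_support
    rw [SimpleGraph.Walk.support_reverse, List.mem_reverse] at hbmem
    exact ⟨b, hbmem, hb2, hb1⟩

private lemma walk_cross (Q : V → Prop) : ∀ {a : V} (p : G.Walk a T), Q a → ¬ Q T →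
    ∃ u v, G.Adj u v ∧ u ∈ p.support ∧ Q u ∧ ¬ Q v := by
  intro a p
  induction p with
  | nil => intro h1 h2; exact absurd h1 h2
  | @cons u v w h q ih =>
    intro h1 h2
    by_cases hb : Q v
    · obtain ⟨u', v', h3, h4, h5, h6⟩ := ih hb h2
      exact ⟨u', v', h3, by
        rw [SimpleGraph.Walk.support_cons]; exact List.mem_cons_of_mem _ h4, h5, h6⟩
    · exact ⟨u, v, h, by
        rw [SimpleGraph.Walk.support_cons]; exact List.mem_cons_self, h1, hb⟩

end Assemble

/-- Menger's theorem for vertex cuts via vertex splitting: for non-adjacent `S, T` in a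
finite graph `G`, the maximum `S`–`T` flow value in the split network equals the minimum
number of vertices (other than `S` and `T`) whose removal disconnects `S` from `T`. -/
theorem menger_vertex_splitting {V : Type*} [Fintype V] [DecidableEq V]
    (G : SimpleGraph V) (S T : V) (hST : ¬ G.Adj S T) (hne : S ≠ T) :
    ∃ m : ℕ,
      IsGreatest {n : ℕ | ∃ f : V ⊕ V → V ⊕ V → ℕ,
        IsSplitFlow G S T f ∧ ∑ y, f (Sum.inl S) y = n} m ∧
      IsLeast {n : ℕ | ∃ C : Finset V, S ∉ C ∧ T ∉ C ∧
        (∀ p : G.Walk S T, ∃ v ∈ p.support, v ∈ C) ∧ C.card = n} m := by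
  classical
  set FS : Set ℕ := {n : ℕ | ∃ f : V ⊕ V → V ⊕ V → ℕ,
    IsSplitFlow G S T f ∧ ∑ y, f (Sum.inl S) y = n} with hFSdef
  set CS : Set ℕ := {n : ℕ | ∃ C : Finset V, S ∉ C ∧ T ∉ C ∧
    (∀ p : G.Walk S T, ∃ v ∈ p.support, v ∈ C) ∧ C.card = n} with hCSdef
  -- the zero flow
  have h0 : (0 : ℕ) ∈ FS := by
    refine ⟨fun _ _ => 0, ⟨?_, ?_, ?_, ?_⟩, by simp⟩
    · intro x y; simp
    · intro x _ _; rfl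
    · intro y; rfl
    · intro y; rfl
  -- the trivial cut
  set C₀ : Finset V := (Finset.univ.erase S).erase T with hC0def
  have hC0S : S ∉ C₀ := by simp [hC0def]
  have hC0T : T ∉ C₀ := by simp [hC0def]
  have hC0cut : ∀ p : G.Walk S T, ∃ v ∈ p.support, v ∈ C₀ := by
    intro p
    obtain ⟨v, hv, hv1, hv2⟩ := walk_internal G S T hST hne p
    exact ⟨v, hv, by simp [hC0def, hv1, hv2]⟩
  have hC0 : C₀.card ∈ CS := ⟨C₀, hC0S, hC0T, hC0cut, rfl⟩
  -- weak duality : every flow value is at most every cut size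
  have hwd : ∀ n ∈ FS, ∀ k ∈ CS, n ≤ k := by
    rintro n ⟨f, hf, rfl⟩ k ⟨C, hCS, hCT, hCcut, rfl⟩
    exact weak_duality G S T f hf C hCS hCT hCcut
  have hbdd : BddAbove FS := ⟨C₀.card, fun n hn => hwd n hn _ hC0⟩
  set m : ℕ := sSup FS with hmdef
  have hmFS : m ∈ FS := Nat.sSup_mem ⟨0, h0⟩ hbdd
  have hub : ∀ n ∈ FS, n ≤ m := fun n hn => le_csSup hbdd hn
  refine ⟨m, ⟨hmFS, hub⟩, ?_, ?_⟩
  swap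
  · -- m is a lower bound of CS
    intro k hk
    exact hwd m hmFS k hk
  -- m ∈ CS : construct a cut from a maximum flow
  obtain ⟨f, hf, hfval⟩ := hmFS
  by_cases hreach : Relation.ReflTransGen (splitRes G S T f) (Sum.inl S) (Sum.inr T)
  · -- augmenting path: contradiction with maximality
    exfalso
    obtain ⟨l, hch, hlast, hnd⟩ := exists_nodup_chain_aux hreach
    cases l with
    | nil => simp at hlast
    | cons z l' =>
      rw [List.Chain, List.chain_cons] at hch
      obtain ⟨hres, hch'⟩ := hch
      have hlast' : (z :: l').getLast? = some (Sum.inr T) := by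
        rw [List.getLast?_cons_cons] at hlast; exact hlast
      have hSnl : Sum.inl S ∉ z :: l' := (List.nodup_cons.mp hnd).1
      have hnd' : (z :: l').Nodup := (List.nodup_cons.mp hnd).2
      have hzS : z ≠ Sum.inl S := fun h => hSnl (h ▸ (List.mem_cons_self (a := z) (l := l')))
      have hznl : z ∉ l' := (List.nodup_cons.mp hnd').1
      have hfw : (f (Sum.inl S) z : ℕ∞) < splitCap G S T (Sum.inl S) z := by
        rcases hres with h | h
        · exact h
        · rw [hf.2.2.1 z] at h; omega
      set g₁ : V ⊕ V → V ⊕ V → ℕ :=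
        fun a b => if a = Sum.inl S ∧ b = z then f a b + 1 else f a b with hg1def
      have hcol : ∀ x, x ≠ z → ∀ a, g₁ a x = f a x := by
        intro x hx a
        simp only [hg1def]
        rw [if_neg (fun h => hx h.2)]
      have hrow : ∀ x, x ≠ Sum.inl S → ∀ a, g₁ x a = f x a := by
        intro x hx a
        simp only [hg1def]
        rw [if_neg (fun h => hx h.1)]
      have hcolz : ∑ a, g₁ a z = (∑ a, f a z) + 1 := by
        have e : ∀ a, g₁ a z = if a = Sum.inl S then f a z + 1 else f a z := by
          intro a; simp only [hg1def]
          by_cases h : a = Sum.inl S <;> simp [h]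
        rw [Finset.sum_congr rfl (fun a _ => e a)]
        exact sum_ite_add (fun a => f a z) (Sum.inl S)
      have hrowS : ∑ a, g₁ (Sum.inl S) a = (∑ a, f (Sum.inl S) a) + 1 := by
        have e : ∀ a, g₁ (Sum.inl S) a = if a = z then f (Sum.inl S) a + 1
            else f (Sum.inl S) a := by
          intro a; simp only [hg1def]
          by_cases h : a = z <;> simp [h]
        rw [Finset.sum_congr rfl (fun a _ => e a)]
        exact sum_ite_add (fun a => f (Sum.inl S) a) z
      have hq1 : ∀ a b, (g₁ a b : ℕ∞) ≤ splitCap G S T a b := by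
        intro a b
        simp only [hg1def]
        split_ifs with h
        · obtain ⟨ha, hb'⟩ := h
          rw [ha, hb']
          have e : ((f (Sum.inl S) z + 1 : ℕ) : ℕ∞) = (f (Sum.inl S) z : ℕ∞) + 1 := by
            push_cast; ring
          rw [e]
          exact Order.add_one_le_of_lt hfw
        · exact hf.1 a b
      have hq2 : ∀ a, g₁ a (Sum.inl S) = 0 := by
        intro a
        have e : ¬(a = Sum.inl S ∧ Sum.inl S = z) := fun h => hzS h.2.symm
        simp only [hg1def]
        rw [if_neg e]
        exact hf.2.2.1 a
      have hq3 : ∀ b, g₁ (Sum.inr T) b = 0 := by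
        intro b
        have e : ¬(Sum.inr T = Sum.inl S ∧ b = z) := fun h => Sum.inr_ne_inl h.1
        simp only [hg1def]
        rw [if_neg e]
        exact hf.2.2.2 b
      have hq4 : ∀ x, x ≠ Sum.inl S → x ≠ Sum.inr T → x ≠ z →
          ∑ a, g₁ a x = ∑ a, g₁ x a := by
        intro x hx1 hx2 hx3
        rw [Finset.sum_congr rfl (fun a _ => hcol x hx3 a),
          Finset.sum_congr rfl (fun a _ => hrow x hx1 a)]
        exact hf.2.1 x hx1 hx2
      have hq6 : z ≠ Sum.inr T → ∑ a, g₁ a z = (∑ a, g₁ z a) + 1 := by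
        intro hzT
        rw [hcolz, Finset.sum_congr rfl (fun a _ => hrow z hzS a)]
        rw [hf.2.1 z hzS hzT]
      have hq7 : ∀ a b, a ∈ l' ∨ b ∈ l' → g₁ a b = f a b := by
        intro a b hab
        have ha' : ¬(a = Sum.inl S ∧ b = z) := by
          rintro ⟨h1, h2⟩
          rcases hab with h | h
          · exact hSnl (List.mem_cons_of_mem z (h1 ▸ h))
          · exact hznl (h2 ▸ h)
        simp only [hg1def]
        rw [if_neg ha']
      obtain ⟨g, hgflow, hgval⟩ :=
        augment_aux G S T f hf.2.2.2 l' z hch' hlast' hnd' hSnl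
          ⟨g₁, hq1, hq2, hq3, hq4, hrowS, hq6, hq7⟩
      have hmem : (∑ a, f (Sum.inl S) a) + 1 ∈ FS := ⟨g, hgflow, hgval⟩
      have hle := hub _ hmem
      rw [hfval] at hle
      omega
  · -- no augmenting path: extract a minimum cut
    set A : Finset (V ⊕ V) := Finset.univ.filter
      (fun x => Relation.ReflTransGen (splitRes G S T f) (Sum.inl S) x) with hAdef
    have hSA : Sum.inl S ∈ A := by
      simp only [hAdef, Finset.mem_filter, Finset.mem_univ, true_and]
      exact Relation.ReflTransGen.refl
    have hTA : Sum.inr T ∉ A := by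
      simp only [hAdef, Finset.mem_filter, Finset.mem_univ, true_and]
      exact hreach
    have hAstep : ∀ x ∈ A, ∀ y, splitRes G S T f x y → y ∈ A := by
      intro x hx y hxy
      simp only [hAdef, Finset.mem_filter, Finset.mem_univ, true_and] at hx ⊢
      exact hx.tail hxy
    set C : Finset V := Finset.univ.filter
      (fun v => Sum.inl v ∈ A ∧ Sum.inr v ∉ A) with hCdef
    have hSrA : Sum.inr S ∈ A := by
      refine hAstep _ hSA _ (Or.inl ?_)
      have : splitCap G S T (Sum.inl S) (Sum.inr S) = ⊤ := by simp [splitCap]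
      rw [this]
      exact WithTop.coe_lt_top _
    have hTlA : Sum.inl T ∉ A := by
      intro h
      refine hTA (hAstep _ h _ (Or.inl ?_))
      have : splitCap G S T (Sum.inl T) (Sum.inr T) = ⊤ := by simp [splitCap]
      rw [this]
      exact WithTop.coe_lt_top _
    have hCS : S ∉ C := by
      simp only [hCdef, Finset.mem_filter, Finset.mem_univ, true_and]
      rintro ⟨-, h⟩
      exact h hSrA
    have hCT : T ∉ C := by
      simp only [hCdef, Finset.mem_filter, Finset.mem_univ, true_and]
      rintro ⟨h, -⟩
      exact hTlA h
    have hCcut : ∀ p : G.Walk S T, ∃ v ∈ p.support, v ∈ C := by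
      intro p
      obtain ⟨u, v, hadj, hmem, hQu, hQv⟩ :=
        walk_cross G T (fun w => Sum.inl w ∈ A) p hSA hTlA
      refine ⟨u, hmem, ?_⟩
      simp only [hCdef, Finset.mem_filter, Finset.mem_univ, true_and]
      refine ⟨hQu, fun hru => hQv (hAstep _ hru _ (Or.inl ?_))⟩
      have : splitCap G S T (Sum.inr u) (Sum.inl v) = ⊤ := by simp [splitCap, hadj]
      rw [this]
      exact WithTop.coe_lt_top _
    -- card C ≤ m
    have hin0 : ∀ x ∈ A, ∀ y ∈ Aᶜ, f y x = 0 := by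
      intro x hx y hy
      by_contra h
      have : splitRes G S T f x y := Or.inr (Nat.pos_of_ne_zero h)
      exact (Finset.mem_compl.mp hy) (hAstep _ hx _ this)
    have hcross := cross_eq G S T f hf A hSA hTA
    have hin0' : ∑ x ∈ A, ∑ y ∈ Aᶜ, f y x = 0 :=
      Finset.sum_eq_zero (fun x hx => Finset.sum_eq_zero (fun y hy => hin0 x hx y hy))
    rw [hin0', add_zero, hfval] at hcross
    -- each internal edge of a cut vertex carries one unit
    have hsat : ∀ v ∈ C, f (Sum.inl v) (Sum.inr v) = 1 := by
      intro v hv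
      have hv' : Sum.inl v ∈ A ∧ Sum.inr v ∉ A := by
        simpa [hCdef] using hv
      have hvS : v ≠ S := fun h => hCS (h ▸ hv)
      have hvT : v ≠ T := fun h => hCT (h ▸ hv)
      have hcap : splitCap G S T (Sum.inl v) (Sum.inr v) = 1 := by
        simp [splitCap, hvS, hvT]
      have hnres : ¬ splitRes G S T f (Sum.inl v) (Sum.inr v) :=
        fun h => hv'.2 (hAstep _ hv'.1 _ h)
      have h1 : ¬ ((f (Sum.inl v) (Sum.inr v) : ℕ∞) < splitCap G S T (Sum.inl v) (Sum.inr v)) :=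
        fun h => hnres (Or.inl h)
      have h2 := hf.1 (Sum.inl v) (Sum.inr v)
      rw [hcap] at h1 h2
      have h3 : (1 : ℕ∞) ≤ (f (Sum.inl v) (Sum.inr v) : ℕ∞) := not_lt.mp h1
      have h4 : (f (Sum.inl v) (Sum.inr v) : ℕ) ≤ 1 := by exact_mod_cast h2
      have h5 : (1 : ℕ) ≤ f (Sum.inl v) (Sum.inr v) := by exact_mod_cast h3
      omega
    have hcard : C.card ≤ m := by
      have e1 : C.card = ∑ v ∈ C, f (Sum.inl v) (Sum.inr v) := by
        rw [Finset.sum_congr rfl hsat]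
        simp
      have hinj : ∀ x ∈ C, ∀ y ∈ C,
          ((Sum.inl x, Sum.inr x) : (V ⊕ V) × (V ⊕ V)) = (Sum.inl y, Sum.inr y) → x = y := by
        intro x _ y _ h
        simpa using congrArg (fun p => p.1) h
      have e2 : ∑ v ∈ C, f (Sum.inl v) (Sum.inr v)
          = ∑ p ∈ C.image (fun v => ((Sum.inl v, Sum.inr v) : (V ⊕ V) × (V ⊕ V))),
              f p.1 p.2 :=
          (Finset.sum_image (f := fun p : (V ⊕ V) × (V ⊕ V) => f p.1 p.2) hinj).symm
      have hsub : C.image (fun v => ((Sum.inl v, Sum.inr v) : (V ⊕ V) × (V ⊕ V)))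
          ⊆ A ×ˢ Aᶜ := by
        intro p hp
        rw [Finset.mem_image] at hp
        obtain ⟨v, hv, rfl⟩ := hp
        have hv' : Sum.inl v ∈ A ∧ Sum.inr v ∉ A := by simpa [hCdef] using hv
        rw [Finset.mem_product]
        exact ⟨hv'.1, Finset.mem_compl.mpr hv'.2⟩
      have e3 : ∑ p ∈ A ×ˢ Aᶜ, f p.1 p.2 = ∑ x ∈ A, ∑ y ∈ Aᶜ, f x y :=
        Finset.sum_product' A Aᶜ f
      calc C.card = ∑ v ∈ C, f (Sum.inl v) (Sum.inr v) := e1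
        _ = _ := e2
        _ ≤ ∑ p ∈ A ×ˢ Aᶜ, f p.1 p.2 := Finset.sum_le_sum_of_subset hsub
        _ = ∑ x ∈ A, ∑ y ∈ Aᶜ, f x y := e3
        _ = m := hcross
    have hcard' : m ≤ C.card := hwd m ⟨f, hf, hfval⟩ C.card ⟨C, hCS, hCT, hCcut, rfl⟩
    exact ⟨C, hCS, hCT, hCcut, le_antisymm hcard hcard'⟩
end
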